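/- Let B be an open ball centered at 0 in a real inner product space X, Y a real vector space, and r, s, t positive integers. If f : B → Y satisfies f(0) = 0 and r·f((s·x + t·y)/r) = s·f(x) + t·f(y) for all x, y ∈ B with ⟨x, y⟩ = 0 and (s·x + t·y)/r ∈ B, then f is orthogonally additive on B: f(x + y) = f(x) + f(y) for all x, y ∈ B with ⟨x, y⟩ = 0 and x + y ∈ B. -/

import Mathlib

theorem stmt_12 {X Y : Type*} [NormedAddCommGroup X] [InnerProductSpace ℝ X]
    [AddCommGroup Y] [Module ℝ Y]
    (R : ℝ) (hR : 0 < R)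
    (r s t : ℕ) (hr : 0 < r) (hs : 0 < s) (ht : 0 < t)
    (f : X → Y) (hf0 : f 0 = 0)
    (heq : ∀ x y : X, ‖x‖ < R → ‖y‖ < R → (inner ℝ x y : ℝ) = 0 →
      ‖((r : ℝ)⁻¹) • ((s : ℝ) • x + (t : ℝ) • y)‖ < R →
      (r : ℝ) • f (((r : ℝ)⁻¹) • ((s : ℝ) • x + (t : ℝ) • y)) = (s : ℝ) • f x + (t : ℝ) • f y) :
    ∀ x y : X, ‖x‖ < R → ‖y‖ < R → (inner ℝ x y : ℝ) = 0 → ‖x + y‖ < R →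
      f (x + y) = f x + f y := by
  intro x y hx hy hxy hxyR
  have hrR : (0:ℝ) < r := by exact_mod_cast hr
  have hsR : (0:ℝ) < s := by exact_mod_cast hs
  have htR : (0:ℝ) < t := by exact_mod_cast ht
  set A : ℝ := (s:ℝ)/r with hA
  set B : ℝ := (t:ℝ)/r with hB
  have hA0 : 0 < A := div_pos hsR hrR
  have hB0 : 0 < B := div_pos htR hrR
  -- the basic orthogonal identity rewritten
  have key : ∀ a b : X, ‖a‖ < R → ‖b‖ < R → (inner ℝ a b : ℝ) = 0 →
      ‖A • a + B • b‖ < R → f (A • a + B • b) = A • f a + B • f b := by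
    intro a b ha hb hab hnorm
    have hrw : (r : ℝ)⁻¹ • ((s : ℝ) • a + (t : ℝ) • b) = A • a + B • b := by
      rw [hA, hB]
      match_scalars <;> field_simp
    have h := heq a b ha hb hab (by rw [hrw]; exact hnorm)
    rw [hrw] at h
    have h2 := congrArg (fun z => (r:ℝ)⁻¹ • z) h
    simp only [smul_smul, inv_mul_cancel₀ hrR.ne', one_smul, smul_add] at h2
    rw [h2, hA, hB]
    congr 1 <;> congr 1 <;> field_simp
  have homA : ∀ u : X, ‖u‖ < R → ‖A • u‖ < R → f (A • u) = A • f u := by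
    intro u hu hAu
    have := key u 0 hu (by simpa using hR) (by simp) (by simpa using hAu)
    simpa [hf0] using this
  have homB : ∀ u : X, ‖u‖ < R → ‖B • u‖ < R → f (B • u) = B • f u := by
    intro u hu hBu
    have := key 0 u (by simpa using hR) hu (by simp) (by simpa using hBu)
    simpa [hf0] using this
  -- main work, given a contraction factor e < 1 with f (e • u) = e • f u on the ball
  have helper : ∀ e : ℝ, 0 < e → e < 1 → (∀ u : X, ‖u‖ < R → f (e • u) = e • f u) →
      f (x + y) = f x + f y := by
    intro e he0 he1 home
    have hepos : ∀ k : ℕ, 0 < e ^ k := fun k => pow_pos he0 k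
    have hpow : ∀ (k : ℕ) (u : X), ‖u‖ < R → f (e ^ k • u) = e ^ k • f u := by
      intro k
      induction k with
      | zero => simp
      | succ n ih =>
        intro u hu
        have hle : e ^ n ≤ 1 := pow_le_one₀ he0.le he1.le
        have h1 : ‖e ^ n • u‖ < R := by
          rw [norm_smul, Real.norm_eq_abs, abs_of_pos (hepos n)]
          calc e ^ n * ‖u‖ ≤ 1 * ‖u‖ :=
                mul_le_mul_of_nonneg_right hle (norm_nonneg u)
            _ = ‖u‖ := one_mul _
            _ < R := hu
        have hrw : e ^ (n+1) • u = e • (e ^ n • u) := by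
          rw [smul_smul, ← pow_succ']
        rw [hrw, home _ h1, ih u hu, smul_smul, ← pow_succ']
    set M : ℝ := max ‖x‖ (max ‖y‖ ‖x + y‖) with hM
    set K : ℝ := max 1 A * max 1 B with hK
    have hK1 : 1 ≤ K := one_le_mul_of_one_le_of_one_le (le_max_left 1 A) (le_max_left 1 B)
    have hKpos : 0 < K := lt_of_lt_of_le one_pos hK1
    have hM0 : 0 ≤ M := le_trans (norm_nonneg x) (le_max_left _ _)
    have hδ : 0 < R / (K * (M + 1)) :=
      div_pos hR (mul_pos hKpos (by linarith))
    obtain ⟨k, hk⟩ := exists_pow_lt_of_lt_one hδ he1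
    set ε : ℝ := e ^ k with hε
    have hε0 : 0 < ε := hepos k
    have hεK : ε * (K * (M + 1)) < R := by
      rw [lt_div_iff₀ (mul_pos hKpos (by linarith))] at hk
      exact hk
    have hbnd : ∀ (c : ℝ) (u : X), 0 < c → c ≤ K → ‖u‖ ≤ M → ‖(c * ε) • u‖ < R := by
      intro c u hc hcK huM
      rw [norm_smul, Real.norm_eq_abs, abs_of_pos (mul_pos hc hε0)]
      have h1 : c * ε * ‖u‖ ≤ K * ε * M := by
        have h0 := norm_nonneg u
        nlinarith [mul_le_mul hcK huM h0 hKpos.le]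
      have h2 : K * ε * M < R := by nlinarith [mul_pos hKpos hε0]
      linarith
    have hmaxA : (0:ℝ) ≤ max 1 A := le_trans zero_le_one (le_max_left 1 A)
    have hmaxB : (0:ℝ) ≤ max 1 B := le_trans zero_le_one (le_max_left 1 B)
    have hAK : A ≤ K :=
      le_trans (le_max_right 1 A) (le_mul_of_one_le_right hmaxA (le_max_left 1 B))
    have hBK : B ≤ K :=
      le_trans (le_max_right 1 B) (le_mul_of_one_le_left hmaxB (le_max_left 1 A))
    have hABK : A * B ≤ K :=
      mul_le_mul (le_max_right 1 A) (le_max_right 1 B) hB0.le hmaxA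
    have hxM : ‖x‖ ≤ M := le_max_left _ _
    have hyM : ‖y‖ ≤ M := le_trans (le_max_left _ _) (le_max_right _ _)
    have hxyM : ‖x + y‖ ≤ M := le_trans (le_max_right _ _) (le_max_right _ _)
    -- scaled points in the ball
    have hεx : ‖ε • x‖ < R := by simpa using hbnd 1 x one_pos hK1 hxM
    have hεy : ‖ε • y‖ < R := by simpa using hbnd 1 y one_pos hK1 hyM
    have hεxy : ‖ε • (x + y)‖ < R := by simpa using hbnd 1 (x+y) one_pos hK1 hxyM
    have hBx : ‖(B * ε) • x‖ < R := hbnd B x hB0 hBK hxM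
    have hAy : ‖(A * ε) • y‖ < R := hbnd A y hA0 hAK hyM
    -- the key identity at the scaled points
    have horth : (inner ℝ ((B * ε) • x) ((A * ε) • y) : ℝ) = 0 := by
      rw [real_inner_smul_left, real_inner_smul_right, hxy]; ring
    have hsum_eq : A • ((B * ε) • x) + B • ((A * ε) • y) = ((A * B) * ε) • (x + y) := by
      module
    have hABxy : ‖((A * B) * ε) • (x + y)‖ < R :=
      hbnd (A * B) (x + y) (mul_pos hA0 hB0) hABK hxyM
    have hmain := key ((B * ε) • x) ((A * ε) • y) hBx hAy horth
      (by rw [hsum_eq]; exact hABxy)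
    rw [hsum_eq] at hmain
    -- decompose the left side
    have hBεxy : ‖(B * ε) • (x + y)‖ < R := hbnd B (x+y) hB0 hBK hxyM
    have l1 : ((A * B) * ε) • (x + y) = A • ((B * ε) • (x + y)) := by module
    have l2 : (B * ε) • (x + y) = B • (ε • (x + y)) := by module
    have lhs_eq : f (((A * B) * ε) • (x + y)) = (A * B) • f (ε • (x + y)) := by
      rw [l1, homA _ hBεxy (by rw [← l1]; exact hABxy), l2,
        homB _ hεxy (by rw [← l2]; exact hBεxy), smul_smul]
    -- decompose the right side
    have r1 : (B * ε) • x = B • (ε • x) := by module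
    have r2 : (A * ε) • y = A • (ε • y) := by module
    have rx : f ((B * ε) • x) = B • f (ε • x) := by
      rw [r1, homB _ hεx (by rw [← r1]; exact hBx)]
    have ry : f ((A * ε) • y) = A • f (ε • y) := by
      rw [r2, homA _ hεy (by rw [← r2]; exact hAy)]
    rw [lhs_eq, rx, ry] at hmain
    -- cancel A*B
    have hmain2 : (A * B) • f (ε • (x + y)) = (A * B) • (f (ε • x) + f (ε • y)) := by
      rw [hmain, smul_add, smul_smul, smul_smul, mul_comm B A]
    have hAB : (A * B) ≠ 0 := (mul_pos hA0 hB0).ne'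
    have hsmall : f (ε • (x + y)) = f (ε • x) + f (ε • y) :=
      smul_right_injective Y hAB hmain2
    -- scale back up
    rw [hpow k _ hxyR, hpow k _ hx, hpow k _ hy] at hsmall
    have hεne : ε ≠ 0 := hε0.ne'
    have := congrArg (fun z => ε⁻¹ • z) hsmall
    simpa [smul_smul, smul_add, ← hε, inv_mul_cancel₀ hεne] using this
  -- build a contraction factor, or handle the degenerate case A = B = 1
  have mk : ∀ C : ℝ, 0 < C → C ≠ 1 →
      (∀ u : X, ‖u‖ < R → ‖C • u‖ < R → f (C • u) = C • f u) →
      ∃ e : ℝ, 0 < e ∧ e < 1 ∧ ∀ u : X, ‖u‖ < R → f (e • u) = e • f u := by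
    intro C hC0 hC1 homC
    rcases lt_or_gt_of_ne hC1 with h | h
    · refine ⟨C, hC0, h, fun u hu => homC u hu ?_⟩
      rw [norm_smul, Real.norm_eq_abs, abs_of_pos hC0]
      calc C * ‖u‖ ≤ 1 * ‖u‖ := mul_le_mul_of_nonneg_right h.le (norm_nonneg u)
        _ = ‖u‖ := one_mul _
        _ < R := hu
    · have hCinv0 : 0 < C⁻¹ := inv_pos.mpr hC0
      refine ⟨C⁻¹, hCinv0, inv_lt_one_of_one_lt₀ h, fun u hu => ?_⟩
      have h1 : ‖C⁻¹ • u‖ < R := by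
        rw [norm_smul, Real.norm_eq_abs, abs_of_pos hCinv0]
        calc C⁻¹ * ‖u‖ ≤ 1 * ‖u‖ :=
              mul_le_mul_of_nonneg_right (inv_le_one_of_one_le₀ h.le) (norm_nonneg u)
          _ = ‖u‖ := one_mul _
          _ < R := hu
      have h2 : f (C • (C⁻¹ • u)) = C • f (C⁻¹ • u) :=
        homC _ h1 (by rw [smul_inv_smul₀ hC0.ne']; exact hu)
      rw [smul_inv_smul₀ hC0.ne'] at h2
      rw [h2, smul_smul, inv_mul_cancel₀ hC0.ne', one_smul]
  by_cases hA1 : A = 1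
  · by_cases hB1 : B = 1
    · have := key x y hx hy hxy (by simpa [hA1, hB1] using hxyR)
      simpa [hA1, hB1] using this
    · obtain ⟨e, he0, he1, home⟩ := mk B hB0 hB1 homB
      exact helper e he0 he1 home
  · obtain ⟨e, he0, he1, home⟩ := mk A hA0 hA1 homA
    exact helper e he0 he1 home
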